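/- Let V, W be isometries on a Hilbert space H, ξ ∈ Ker(V*), η ∈ Ker(W*). Then the composition of the exponential operators satisfies T_{e(ξ)}^{V} ∘ T_{e(η)}^{W} = T_{e(ξ + Vη)}^{VW}, where ξ + Vη ∈ Ker((VW)*). -/
import Mathlib


open scoped ComplexInnerProductSpace

theorem stmt10 {H Γ : Type*} [NormedAddCommGroup H] [InnerProductSpace ℂ H]
    [CompleteSpace H] [NormedAddCommGroup Γ] [InnerProductSpace ℂ Γ]
    [CompleteSpace Γ]
    (e : H → Γ)
    (htotal : (Submodule.span ℂ (Set.range e)).topologicalClosure = ⊤)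
    (hinner : ∀ ξ η : H, ⟪e ξ, e η⟫ = Complex.exp ⟪ξ, η⟫)
    (V W : H →L[ℂ] H)
    (hV : ∀ x : H, ‖V x‖ = ‖x‖) (hW : ∀ x : H, ‖W x‖ = ‖x‖)
    (ξ η : H)
    (hξ : ContinuousLinearMap.adjoint V ξ = 0)
    (hη : ContinuousLinearMap.adjoint W η = 0)
    (T₁ T₂ T₃ : Γ →L[ℂ] Γ)
    (hT₁ : ∀ μ : H, T₁ (e μ) = e (ξ + V μ))
    (hT₂ : ∀ μ : H, T₂ (e μ) = e (η + W μ))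
    (hT₃ : ∀ μ : H, T₃ (e μ) = e ((ξ + V η) + (V.comp W) μ)) :
    ContinuousLinearMap.adjoint (V.comp W) (ξ + V η) = 0 ∧
    T₁.comp T₂ = T₃ := by
  have hVV : (ContinuousLinearMap.adjoint V).comp V = ContinuousLinearMap.id ℂ H :=
    V.norm_map_iff_adjoint_comp_self.mp hV
  constructor
  · have : ContinuousLinearMap.adjoint V (ξ + V η) = η := by
      rw [map_add, hξ, zero_add]
      have := congrFun (congrArg DFunLike.coe hVV) η
      simpa using this
    rw [ContinuousLinearMap.adjoint_comp, ContinuousLinearMap.comp_apply, this, hη]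
  · have key : ∀ μ : H, (T₁.comp T₂) (e μ) = T₃ (e μ) := by
      intro μ
      have : ξ + V (η + W μ) = (ξ + V η) + (V.comp W) μ := by
        simp [map_add, add_assoc]
      rw [ContinuousLinearMap.comp_apply, hT₂, hT₁, hT₃, this]
    apply ContinuousLinearMap.ext
    intro x
    have hx : x ∈ (Submodule.span ℂ (Set.range e)).topologicalClosure := by
      rw [htotal]; trivial
    have hspan : ∀ y ∈ Submodule.span ℂ (Set.range e), (T₁.comp T₂) y = T₃ y := by
      intro y hy
      induction hy using Submodule.span_induction with
      | mem z hz => obtain ⟨μ, rfl⟩ := hz; exact key μ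
      | zero => simp
      | add a b _ _ ha hb =>
          simp only [map_add, ContinuousLinearMap.comp_apply] at ha hb ⊢; rw [ha, hb]
      | smul c a _ ha =>
          simp only [map_smul, ContinuousLinearMap.comp_apply] at ha ⊢; rw [ha]
    have : Set.EqOn (T₁.comp T₂) T₃ (closure (Submodule.span ℂ (Set.range e) : Set Γ)) :=
      Set.EqOn.closure hspan (T₁.comp T₂).continuous T₃.continuous
    exact this hx
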